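/- Let T be a contraction on H and let x ∈ K := ker(Id − T*T). Then for every λ ∈ ℂ with |λ| < 1: (i) for every f ∈ K⋆^⊥ one has ⟨Tx, (Id − λ̄T)⁻¹f⟩ = λ⟨x, (Id − λ̄T)⁻¹f⟩; and (ii) for every g ∈ K^⊥ one has ⟨x, (Id − λ̄T*)⁻¹g⟩ = λ⟨Tx, (Id − λ̄T*)⁻¹g⟩. -/

import Mathlib

open scoped InnerProductSpace ComplexConjugate
open ContinuousLinearMap

/-- Let `T` be a contraction on `H`, `K = ker(Id − T*T)`,
`K⋆ = ker(Id − TT*)`, and `x ∈ K`. Then for every `λ` with `|λ| < 1`: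
(i) `⟨Tx, (Id − λ̄T)⁻¹f⟩ = λ⟨x, (Id − λ̄T)⁻¹f⟩` for every `f ∈ K⋆^⊥`, and
(ii) `⟨x, (Id − λ̄T*)⁻¹g⟩ = λ⟨Tx, (Id − λ̄T*)⁻¹g⟩` for every `g ∈ K^⊥`.
(Paper inner products `⟨·,·⟩` are linear in the first variable, i.e.
`⟨u,v⟩ = ⟪v,u⟫_ℂ` in Mathlib's convention; the inverses are `Ring.inverse`.) -/
theorem unitary_part_eigen_relations
    {H : Type*} [NormedAddCommGroup H] [InnerProductSpace ℂ H] [CompleteSpace H]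
    (T : H →L[ℂ] H) (hT : ‖T‖ ≤ 1)
    (K Ks : Submodule ℂ H)
    (hK : K = LinearMap.ker ((1 - adjoint T ∘L T : H →L[ℂ] H) : H →ₗ[ℂ] H))
    (hKs : Ks = LinearMap.ker ((1 - T ∘L adjoint T : H →L[ℂ] H) : H →ₗ[ℂ] H))
    (x : H) (hx : x ∈ K)
    (lam : ℂ) (hlam : ‖lam‖ < 1) :
    (∀ f ∈ Ksᗮ,
      ⟪Ring.inverse (1 - (conj lam) • T) f, T x⟫_ℂ
        = lam * ⟪Ring.inverse (1 - (conj lam) • T) f, x⟫_ℂ) ∧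
    (∀ g ∈ Kᗮ,
      ⟪Ring.inverse (1 - (conj lam) • adjoint T) g, x⟫_ℂ
        = lam * ⟪Ring.inverse (1 - (conj lam) • adjoint T) g, T x⟫_ℂ) := by

  have hx0 : (1 - adjoint T ∘L T) x = 0 := by rw [hK] at hx; exact hx
  have hx' : adjoint T (T x) = x := by
    have h := hx0
    simp only [ContinuousLinearMap.sub_apply, ContinuousLinearMap.one_apply,
      ContinuousLinearMap.comp_apply, sub_eq_zero] at h
    exact h.symm
  have hTx : T x ∈ Ks := by
    rw [hKs]
    simp only [LinearMap.mem_ker, ContinuousLinearMap.coe_coe,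
      ContinuousLinearMap.sub_apply, ContinuousLinearMap.one_apply,
      ContinuousLinearMap.comp_apply, hx', sub_self]
  have hnorm1 : ‖(conj lam) • T‖ < 1 := by
    rw [norm_smul]
    calc ‖(conj lam : ℂ)‖ * ‖T‖ ≤ ‖(conj lam : ℂ)‖ * 1 :=
          mul_le_mul_of_nonneg_left hT (norm_nonneg _)
      _ = ‖lam‖ := by
          rw [mul_one, Complex.norm_conj]
      _ < 1 := hlam
  have hnorm2 : ‖(conj lam) • adjoint T‖ < 1 := by
    rw [norm_smul, LinearIsometryEquiv.norm_map (adjoint : (H →L[ℂ] H) ≃ₗᵢ⋆[ℂ] (H →L[ℂ] H)) T]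
    calc ‖(conj lam : ℂ)‖ * ‖T‖ ≤ ‖(conj lam : ℂ)‖ * 1 :=
          mul_le_mul_of_nonneg_left hT (norm_nonneg _)
      _ = ‖lam‖ := by
          rw [mul_one, Complex.norm_conj]
      _ < 1 := hlam
  have hunit1 : IsUnit (1 - (conj lam) • T) := (Units.oneSub _ hnorm1).isUnit
  have hunit2 : IsUnit (1 - (conj lam) • adjoint T) := (Units.oneSub _ hnorm2).isUnit
  have hinv1 : ∀ y : H, (1 - (conj lam) • T) (Ring.inverse (1 - (conj lam) • T) y) = y := by
    intro y
    have h : (1 - (conj lam) • T) * Ring.inverse (1 - (conj lam) • T) = 1 :=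
      Ring.mul_inverse_cancel _ hunit1
    calc (1 - (conj lam) • T) (Ring.inverse (1 - (conj lam) • T) y)
        = ((1 - (conj lam) • T) * Ring.inverse (1 - (conj lam) • T)) y := rfl
      _ = y := by rw [h]; rfl
  have hinv2 : ∀ y : H,
      (1 - (conj lam) • adjoint T) (Ring.inverse (1 - (conj lam) • adjoint T) y) = y := by
    intro y
    have h : (1 - (conj lam) • adjoint T) * Ring.inverse (1 - (conj lam) • adjoint T) = 1 :=
      Ring.mul_inverse_cancel _ hunit2
    calc (1 - (conj lam) • adjoint T) (Ring.inverse (1 - (conj lam) • adjoint T) y)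
        = ((1 - (conj lam) • adjoint T) * Ring.inverse (1 - (conj lam) • adjoint T)) y := rfl
      _ = y := by rw [h]; rfl
  constructor
  · intro f hf
    set u := Ring.inverse (1 - (conj lam) • T) f with hu
    have hfe : f = u - (conj lam) • T u := by
      conv_lhs => rw [← hinv1 f]
      simp [ContinuousLinearMap.sub_apply, ContinuousLinearMap.smul_apply]; rfl
    have h0 : ⟪f, T x⟫_ℂ = 0 := (Submodule.mem_orthogonal' Ks f).mp hf (T x) hTx
    have hTuTx : ⟪T u, T x⟫_ℂ = ⟪u, x⟫_ℂ := by
      rw [← adjoint_inner_right, hx']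
    have hexp : ⟪f, T x⟫_ℂ = ⟪u, T x⟫_ℂ - lam * ⟪u, x⟫_ℂ := by
      rw [hfe, inner_sub_left, inner_smul_left, hTuTx, Complex.conj_conj]
    rw [h0] at hexp
    linear_combination -hexp
  · intro g hg
    set v := Ring.inverse (1 - (conj lam) • adjoint T) g with hv
    have hge : g = v - (conj lam) • adjoint T v := by
      conv_lhs => rw [← hinv2 g]
      simp [ContinuousLinearMap.sub_apply, ContinuousLinearMap.smul_apply]; rfl
    have h0 : ⟪g, x⟫_ℂ = 0 := (Submodule.mem_orthogonal' K g).mp hg x hx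
    have hTv : ⟪adjoint T v, x⟫_ℂ = ⟪v, T x⟫_ℂ := adjoint_inner_left T x v
    have hexp : ⟪g, x⟫_ℂ = ⟪v, x⟫_ℂ - lam * ⟪v, T x⟫_ℂ := by
      rw [hge, inner_sub_left, inner_smul_left, hTv, Complex.conj_conj]
    rw [h0] at hexp
    linear_combination -hexp
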